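/- Let D be a Swiss cheese with δ(D) > 0, and let C be a chain in the partially ordered set (S(D), ≥) of pairs (E, f) of Swiss cheeses above D together with allocation maps. Then C has an upper bound in S(D). -/

import Mathlib

/-- An open disc in the complex plane: a set of the form `B(z,r)` with `r > 0`. -/
def IsOpenDisc (D : Set ℂ) : Prop := ∃ z : ℂ, ∃ r : ℝ, 0 < r ∧ D = Metric.ball z r

/-- A closed disc in the complex plane: `{w : |w - z| ≤ r}` with `r > 0`. -/
def IsClosedDisc (D : Set ℂ) : Prop := ∃ z : ℂ, ∃ r : ℝ, 0 < r ∧ D = Metric.closedBall z r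

/-- The radius of a disc, computed as half its diameter (so `r = 0` for `∅` or singletons). -/
noncomputable def discRadius (D : Set ℂ) : ℝ := Metric.diam D / 2

/-- A Swiss cheese: a closed disc `Δ` together with a countable collection `𝒟` of open discs. -/
structure SwissCheese where
  Δ : Set ℂ
  𝒟 : Set (Set ℂ)
  hΔ : IsClosedDisc Δ
  h𝒟 : ∀ D ∈ 𝒟, IsOpenDisc D
  hcount : 𝒟.Countable

/-- `D̃ = 𝒟 ∪ {ℂ ∖ Δ}`. -/
def SwissCheese.tilde (D : SwissCheese) : Set (Set ℂ) := D.𝒟 ∪ {D.Δᶜ}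

/-- The associated Swiss cheese set `X_D = Δ ∖ ⋃ 𝒟`. -/
def SwissCheese.X (D : SwissCheese) : Set ℂ := D.Δ \ ⋃₀ D.𝒟

/-- The (possibly infinite) sum of the radii of a collection of discs. -/
noncomputable def radSum (S : Set (Set ℂ)) : ENNReal :=
  ∑' D : S, ENNReal.ofReal (discRadius D)

/-- `δ(D) = r(Δ) − Σ_{D'∈𝒟} r(D')`, possibly `−∞`. -/
noncomputable def SwissCheese.delta (D : SwissCheese) : EReal :=
  (discRadius D.Δ : EReal) - ((radSum D.𝒟 : ENNReal) : EReal)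

/-- An allocation map between Swiss cheeses. -/
structure IsAllocationMap (D E : SwissCheese) (f : Set ℂ → Set ℂ) : Prop where
  maps_to : ∀ U ∈ D.tilde, f U ∈ E.tilde
  a1 : ∀ U ∈ D.tilde, U ⊆ f U
  a2 : ENNReal.ofReal (discRadius D.Δ - discRadius E.Δ) ≤
      radSum {U | U ∈ D.𝒟 ∧ f U = E.Δᶜ}
  a3 : ∀ E' ∈ E.𝒟, ENNReal.ofReal (discRadius E') ≤ radSum {U | U ∈ D.𝒟 ∧ f U = E'}

/-- An element of `S(D)`: a Swiss cheese together with an allocation map from `D̃`. -/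
structure SPair (D : SwissCheese) where
  E : SwissCheese
  f : Set ℂ → Set ℂ
  hf : IsAllocationMap D E f

/-- `p ≥ q` in `S(D)`: there is an allocation map `g : q.Ẽ → p.Ẽ` with `g ∘ q.f = p.f`. -/
def SPair.ge {D : SwissCheese} (p q : SPair D) : Prop :=
  ∃ g : Set ℂ → Set ℂ, IsAllocationMap q.E p.E g ∧ ∀ U ∈ D.tilde, g (q.f U) = p.f U

open Metric Set

/-- For any `t ≥ 0` there is a point at distance `t` from `a` and `dist a b + t` from `b`. -/
lemma exists_far_point (a b : ℂ) {t : ℝ} (ht : 0 ≤ t) :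
    ∃ x : ℂ, dist x a = t ∧ dist x b = dist a b + t := by
  rcases eq_or_ne a b with rfl | hab
  · exact ⟨a + t, by simp [Complex.dist_eq, abs_of_nonneg ht], by
      simp [Complex.dist_eq, abs_of_nonneg ht]⟩
  · set d : ℝ := ‖a - b‖ with hd
    have hd0 : 0 < d := by
      simpa [hd, sub_eq_zero] using hab
    set u : ℂ := (a - b) / d with hu
    have hu1 : ‖u‖ = 1 := by
      rw [hu, norm_div]
      rw [Complex.norm_real, Real.norm_eq_abs, abs_of_pos hd0, ← hd, div_self hd0.ne']
    refine ⟨a + t * u, ?_, ?_⟩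
    · simp [Complex.dist_eq, norm_mul, hu1, Complex.norm_real, abs_of_nonneg ht]
    · have hdc : (d : ℂ) ≠ 0 := by exact_mod_cast hd0.ne'
      have hdu : (d : ℂ) * u = a - b := by
        rw [hu, mul_comm, div_mul_cancel₀ _ hdc]
      have key : a + t * u - b = ((d + t : ℝ) : ℂ) * u := by
        push_cast
        rw [add_mul, hdu]
        ring
      rw [Complex.dist_eq, key, norm_mul, hu1, Complex.norm_real, Real.norm_eq_abs, Complex.dist_eq,
        abs_of_nonneg (by linarith), hd]
      ring

lemma discRadius_closedBall (z : ℂ) {r : ℝ} (hr : 0 ≤ r) :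
    discRadius (closedBall z r) = r := by
  have h1 : diam (closedBall z r) ≤ 2 * r := diam_closedBall hr
  obtain ⟨x, hx1, hx2⟩ := exists_far_point z (z + r) hr
  have hxz : (z : ℂ) ∈ closedBall z r := by simp [hr]
  have hx1' : x ∈ closedBall z r := by simp [mem_closedBall, hx1]
  have hzz : dist z (z + r) = r := by simp [Complex.dist_eq, abs_of_nonneg hr]
  have hmem : z + (r : ℂ) ∈ closedBall z r := by
    simp [mem_closedBall, dist_comm, hzz]
  have h2 : 2 * r ≤ diam (closedBall z r) := by
    have := dist_le_diam_of_mem isBounded_closedBall hx1' hmem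
    rw [hx2, hzz] at this
    linarith
  unfold discRadius; linarith

lemma discRadius_ball (z : ℂ) {r : ℝ} (hr : 0 < r) :
    discRadius (ball z r) = r := by
  have h1 : diam (ball z r) ≤ 2 * r := diam_ball hr.le
  have h2 : ∀ t : ℝ, 0 ≤ t → t < r → 2 * t ≤ diam (ball z r) := by
    intro t ht htr
    obtain ⟨x, hx1, hx2⟩ := exists_far_point z (z + t) ht
    have hzz : dist z (z + t) = t := by simp [Complex.dist_eq, abs_of_nonneg ht]
    have hx1' : x ∈ ball z r := by simp [mem_ball, hx1, htr]
    have hmem : z + (t : ℂ) ∈ ball z r := by simp [mem_ball, dist_comm, hzz, htr]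
    have := dist_le_diam_of_mem isBounded_ball hx1' hmem
    rw [hx2, hzz] at this
    linarith
  have h3 : 2 * r ≤ diam (ball z r) := by
    have : ∀ ε > (0:ℝ), 2 * r - ε ≤ diam (ball z r) := by
      intro ε hε
      rcases le_or_gt r (ε/2) with h | h
      · have := diam_nonneg (s := ball z r); linarith
      · have := h2 (r - ε/2) (by linarith) (by linarith)
        linarith
    exact le_of_forall_sub_le this
  unfold discRadius; linarith

lemma closedBall_subset_inv {a b : ℂ} {r s : ℝ} (hr : 0 ≤ r)
    (h : closedBall a r ⊆ closedBall b s) : dist a b + r ≤ s := by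
  obtain ⟨x, hx1, hx2⟩ := exists_far_point a b hr
  have : x ∈ closedBall b s := h (by simp [mem_closedBall, hx1])
  rw [mem_closedBall, hx2, dist_comm] at this
  linarith [dist_comm a b ▸ this]

lemma ball_subset_inv {a b : ℂ} {r s : ℝ} (hr : 0 < r)
    (h : ball a r ⊆ ball b s) : dist a b + r ≤ s := by
  have key : ∀ t : ℝ, 0 ≤ t → t < r → dist a b + t < s := by
    intro t ht htr
    obtain ⟨x, hx1, hx2⟩ := exists_far_point a b ht
    have : x ∈ ball b s := h (by simp [mem_ball, hx1, htr])
    rw [mem_ball, hx2] at this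
    linarith
  have : ∀ ε > (0:ℝ), dist a b + r - ε ≤ s := by
    intro ε hε
    rcases le_or_gt r ε with h' | h'
    · have h0 := key 0 le_rfl hr
      linarith
    · have := key (r - ε) (by linarith) (by linarith)
      linarith
  exact le_of_forall_sub_le this

lemma discRadius_mono {V W : Set ℂ} (h : V ⊆ W) (hW : Bornology.IsBounded W) :
    discRadius V ≤ discRadius W := by
  unfold discRadius
  have := diam_mono h hW
  linarith

open Filter Topology in
lemma tendsto_aux (c : ℝ) : Filter.Tendsto (fun n : ℕ => c + 2/(n+1)) Filter.atTop (nhds c) := by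
  have h : Filter.Tendsto (fun n : ℕ => 2/(n+1) : ℕ → ℝ) Filter.atTop (nhds 0) := by
    have := tendsto_one_div_add_atTop_nhds_zero_nat (𝕜 := ℝ)
    have h2 := this.const_mul (2:ℝ)
    simpa [mul_one_div, div_eq_mul_inv] using h2
  simpa using tendsto_const_nhds.add h

lemma two_div_nat (k : ℕ) : (2:ℝ)/(k+1) = 1/(k+1) + 1/(k+1) := by ring

lemma one_div_nat_pos (n : ℕ) : (0:ℝ) < 1/(n+1) := by positivity

lemma one_div_nat_mono {n N : ℕ} (h : N ≤ n) : (1:ℝ)/(n+1) ≤ 1/(N+1) := by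
  apply one_div_le_one_div_of_le (by positivity)
  have : (N:ℝ) ≤ n := by exact_mod_cast h
  linarith

/-- The intersection of a chain of closed balls in `ℂ` is a closed ball. -/
lemma chain_closedBalls {ι : Type} [Nonempty ι] (z : ι → ℂ) (r : ι → ℝ)
    (hr : ∀ i, 0 < r i)
    (hch : ∀ i j, closedBall (z i) (r i) ⊆ closedBall (z j) (r j) ∨
        closedBall (z j) (r j) ⊆ closedBall (z i) (r i)) :
    ∃ z₀ : ℂ, (⋂ i, closedBall (z i) (r i)) = closedBall z₀ (⨅ i, r i) := by
  set r₀ := ⨅ i, r i with hr₀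
  have hbdd : BddBelow (Set.range r) := ⟨0, by rintro x ⟨i, rfl⟩; exact (hr i).le⟩
  have hr₀le : ∀ i, r₀ ≤ r i := fun i => ciInf_le hbdd i
  have key : ∀ i j, dist (z i) (z j) ≤ (r i - r₀) + (r j - r₀) := by
    intro i j
    rcases hch i j with h | h
    · have := closedBall_subset_inv (hr i).le h
      linarith [hr₀le i, hr₀le j]
    · have := closedBall_subset_inv (hr j).le h
      rw [dist_comm] at this
      linarith [hr₀le i, hr₀le j]
  have hseq : ∀ n : ℕ, ∃ i, r i < r₀ + 1/(n+1) := by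
    intro n
    exact exists_lt_of_ciInf_lt (by linarith [one_div_nat_pos n])
  choose s hs using hseq
  have hsn : ∀ n, r (s n) - r₀ < 1/(n+1) := fun n => by linarith [hs n]
  have hcauchy : CauchySeq (fun n => z (s n)) := by
    apply cauchySeq_of_le_tendsto_0 (fun n : ℕ => 0 + 2/(n+1)) _ (by simpa using tendsto_aux 0)
    intro n m N hn hm
    have h1 := key (s n) (s m)
    have h2 := hsn n
    have h3 := hsn m
    have h4 := one_div_nat_mono hn
    have h5 := one_div_nat_mono hm
    linarith [two_div_nat N]
  obtain ⟨z₀, hz₀⟩ := cauchySeq_tendsto_of_complete hcauchy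
  have hdist : ∀ n, dist (z (s n)) z₀ ≤ 1/(n+1) := by
    intro n
    have h1 : Filter.Tendsto (fun m => dist (z (s n)) (z (s m))) Filter.atTop
        (nhds (dist (z (s n)) z₀)) := tendsto_const_nhds.dist hz₀
    have h2 : Filter.Tendsto (fun m : ℕ => (1/(n+1) + 2/(m+1) : ℝ)) Filter.atTop
        (nhds (1/(n+1))) := tendsto_aux _
    refine le_of_tendsto_of_tendsto' h1 h2 (fun m => ?_)
    have := key (s n) (s m)
    have := hsn n
    have := hsn m
    have h4 := one_div_nat_pos m
    linarith [two_div_nat m]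
  have hcenter : ∀ i, dist (z i) z₀ ≤ r i - r₀ := by
    intro i
    have hall : ∀ n : ℕ, dist (z i) z₀ ≤ (r i - r₀) + 2/(n+1) := by
      intro n
      have h1 := key i (s n)
      have h2 := hdist n
      have h3 := hsn n
      have h4 := dist_triangle (z i) (z (s n)) z₀
      linarith [two_div_nat n]
    exact ge_of_tendsto (tendsto_aux _) (Filter.Eventually.of_forall hall)
  refine ⟨z₀, Set.Subset.antisymm ?_ ?_⟩
  · intro w hw
    simp only [Set.mem_iInter, mem_closedBall] at hw
    rw [mem_closedBall]
    have hall : ∀ n : ℕ, dist w z₀ ≤ r₀ + 2/(n+1) := by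
      intro n
      have h1 := hw (s n)
      have h2 := hdist n
      have h3 := hsn n
      have h4 := dist_triangle w (z (s n)) z₀
      linarith [two_div_nat n]
    exact ge_of_tendsto (tendsto_aux _) (Filter.Eventually.of_forall hall)
  · intro w hw
    rw [mem_closedBall] at hw
    simp only [Set.mem_iInter, mem_closedBall]
    intro i
    have h1 := hcenter i
    have h2 := dist_triangle w z₀ (z i)
    rw [dist_comm z₀ (z i)] at h2
    linarith

/-- The union of a chain of open balls in `ℂ` with bounded radii is an open ball. -/
lemma chain_balls {ι : Type} [Nonempty ι] (z : ι → ℂ) (r : ι → ℝ)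
    (hr : ∀ i, 0 < r i) (hbdd : BddAbove (Set.range r))
    (hch : ∀ i j, ball (z i) (r i) ⊆ ball (z j) (r j) ∨
        ball (z j) (r j) ⊆ ball (z i) (r i)) :
    ∃ z₀ : ℂ, (⋃ i, ball (z i) (r i)) = ball z₀ (⨆ i, r i) := by
  set r₀ := ⨆ i, r i with hr₀
  have hr₀le : ∀ i, r i ≤ r₀ := fun i => le_ciSup hbdd i
  have key : ∀ i j, dist (z i) (z j) ≤ (r₀ - r i) + (r₀ - r j) := by
    intro i j
    rcases hch i j with h | h
    · have := ball_subset_inv (hr i) h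
      linarith [hr₀le i, hr₀le j]
    · have := ball_subset_inv (hr j) h
      rw [dist_comm] at this
      linarith [hr₀le i, hr₀le j]
  have hseq : ∀ n : ℕ, ∃ i, r₀ - 1/(n+1) < r i := by
    intro n
    exact exists_lt_of_lt_ciSup (by linarith [one_div_nat_pos n])
  choose s hs using hseq
  have hsn : ∀ n, r₀ - r (s n) < 1/(n+1) := fun n => by linarith [hs n]
  have hcauchy : CauchySeq (fun n => z (s n)) := by
    apply cauchySeq_of_le_tendsto_0 (fun n : ℕ => 0 + 2/(n+1)) _ (by simpa using tendsto_aux 0)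
    intro n m N hn hm
    have h1 := key (s n) (s m)
    have h2 := hsn n
    have h3 := hsn m
    have h4 := one_div_nat_mono hn
    have h5 := one_div_nat_mono hm
    linarith [two_div_nat N]
  obtain ⟨z₀, hz₀⟩ := cauchySeq_tendsto_of_complete hcauchy
  have hdist : ∀ n, dist (z (s n)) z₀ ≤ 1/(n+1) := by
    intro n
    have h1 : Filter.Tendsto (fun m => dist (z (s n)) (z (s m))) Filter.atTop
        (nhds (dist (z (s n)) z₀)) := tendsto_const_nhds.dist hz₀
    have h2 : Filter.Tendsto (fun m : ℕ => (1/(n+1) + 2/(m+1) : ℝ)) Filter.atTop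
        (nhds (1/(n+1))) := tendsto_aux _
    refine le_of_tendsto_of_tendsto' h1 h2 (fun m => ?_)
    have := key (s n) (s m)
    have := hsn n
    have := hsn m
    have h4 := one_div_nat_pos m
    linarith [two_div_nat m]
  have hcenter : ∀ i, dist (z i) z₀ ≤ r₀ - r i := by
    intro i
    have hall : ∀ n : ℕ, dist (z i) z₀ ≤ (r₀ - r i) + 2/(n+1) := by
      intro n
      have h1 := key i (s n)
      have h2 := hdist n
      have h3 := hsn n
      have h4 := dist_triangle (z i) (z (s n)) z₀
      linarith [two_div_nat n]
    exact ge_of_tendsto (tendsto_aux _) (Filter.Eventually.of_forall hall)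
  refine ⟨z₀, Set.Subset.antisymm ?_ ?_⟩
  · intro w hw
    simp only [Set.mem_iUnion, mem_ball] at hw
    obtain ⟨i, hi⟩ := hw
    rw [mem_ball]
    have h1 := hcenter i
    have h2 := dist_triangle w (z i) z₀
    linarith
  · intro w hw
    rw [mem_ball] at hw
    obtain ⟨n, hn⟩ := exists_nat_one_div_lt (show (0:ℝ) < (r₀ - dist w z₀)/2 by linarith)
    have h1 : dist w (z (s n)) ≤ dist w z₀ + dist z₀ (z (s n)) := dist_triangle _ _ _
    rw [dist_comm z₀ (z (s n))] at h1
    have h2 := hdist n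
    have h3 := hs n
    have : dist w (z (s n)) < r (s n) := by linarith
    exact Set.mem_iUnion.mpr ⟨s n, by rwa [mem_ball]⟩

/-! ### Sums of radii -/

lemma radSum_mono {S T : Set (Set ℂ)} (h : S ⊆ T) : radSum S ≤ radSum T := by
  unfold radSum
  have := ENNReal.tsum_comp_le_tsum_of_injective (Set.inclusion_injective h)
    (fun x : T => ENNReal.ofReal (discRadius x))
  simpa [Set.coe_inclusion] using this

lemma le_radSum_of_mem {S : Set (Set ℂ)} {V : Set ℂ} (h : V ∈ S) :
    ENNReal.ofReal (discRadius V) ≤ radSum S :=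
  ENNReal.le_tsum (⟨V, h⟩ : S)

lemma radSum_empty : radSum (∅ : Set (Set ℂ)) = 0 := by
  unfold radSum
  exact tsum_empty

lemma ofReal_le_of_forall_sub {a : ℝ} {L : ENNReal}
    (h : ∀ ε : ℝ, 0 < ε → ENNReal.ofReal (a - ε) ≤ L) : ENNReal.ofReal a ≤ L := by
  rcases eq_or_ne L ⊤ with rfl | hL
  · exact le_top
  · rw [ENNReal.ofReal_le_iff_le_toReal hL]
    apply le_of_forall_sub_le
    intro ε hε
    have := h ε hε
    rcases le_or_gt (a - ε) 0 with h0 | h0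
    · linarith [ENNReal.toReal_nonneg (a := L)]
    · rwa [ENNReal.ofReal_le_iff_le_toReal hL] at this

/-! ### Basic facts about Swiss cheeses and allocation maps -/

lemma SwissCheese.compl_mem_tilde (A : SwissCheese) : A.Δᶜ ∈ A.tilde := Or.inr rfl

lemma SwissCheese.mem_tilde_of_mem {A : SwissCheese} {U : Set ℂ} (h : U ∈ A.𝒟) :
    U ∈ A.tilde := Or.inl h

lemma isBounded_of_mem_𝒟 {A : SwissCheese} {U : Set ℂ} (h : U ∈ A.𝒟) :
    Bornology.IsBounded U := by
  obtain ⟨z, r, hr, rfl⟩ := A.h𝒟 U h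
  exact isBounded_ball

lemma isBounded_delta (A : SwissCheese) : Bornology.IsBounded A.Δ := by
  obtain ⟨z, r, hr, h⟩ := A.hΔ
  rw [h]; exact isBounded_closedBall

lemma not_isBounded_compl (A : SwissCheese) : ¬ Bornology.IsBounded A.Δᶜ := by
  intro h
  have : Bornology.IsBounded (Set.univ : Set ℂ) := by
    rw [← Set.union_compl_self A.Δ]
    exact (isBounded_delta A).union h
  exact NormedSpace.unbounded_univ ℝ ℂ this

lemma eq_compl_of_unbounded {A : SwissCheese} {V : Set ℂ} (hV : V ∈ A.tilde)
    (h : ¬ Bornology.IsBounded V) : V = A.Δᶜ := by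
  rcases hV with hV | hV
  · exact absurd (isBounded_of_mem_𝒟 hV) h
  · exact hV

lemma mem_𝒟_ne_compl {A B : SwissCheese} {U : Set ℂ} (h : U ∈ A.𝒟) : U ≠ B.Δᶜ := by
  intro hU
  exact not_isBounded_compl B (hU ▸ isBounded_of_mem_𝒟 h)

lemma IsAllocationMap.map_compl {A B : SwissCheese} {g : Set ℂ → Set ℂ}
    (hg : IsAllocationMap A B g) : g A.Δᶜ = B.Δᶜ := by
  apply eq_compl_of_unbounded (hg.maps_to _ A.compl_mem_tilde)
  intro h
  exact not_isBounded_compl A (h.subset (hg.a1 _ A.compl_mem_tilde))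

lemma IsAllocationMap.delta_subset {A B : SwissCheese} {g : Set ℂ → Set ℂ}
    (hg : IsAllocationMap A B g) : B.Δ ⊆ A.Δ := by
  have := hg.a1 _ A.compl_mem_tilde
  rw [hg.map_compl] at this
  exact compl_subset_compl.mp this

lemma discRadius_pos_of_open {U : Set ℂ} (h : IsOpenDisc U) : 0 < discRadius U := by
  obtain ⟨z, r, hr, rfl⟩ := h
  rwa [discRadius_ball z hr]

lemma IsAllocationMap.exists_preimage {A B : SwissCheese} {g : Set ℂ → Set ℂ}
    (hg : IsAllocationMap A B g) {W : Set ℂ} (hW : W ∈ B.𝒟) :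
    ∃ U, U ∈ A.𝒟 ∧ g U = W := by
  by_contra h
  push_neg at h
  have hset : {U | U ∈ A.𝒟 ∧ g U = W} = (∅ : Set (Set ℂ)) := by
    ext U; simp only [Set.mem_setOf_eq, Set.mem_empty_iff_false, iff_false, not_and]
    exact h U
  have h3 := hg.a3 W hW
  rw [hset, radSum_empty, nonpos_iff_eq_zero, ENNReal.ofReal_eq_zero] at h3
  linarith [discRadius_pos_of_open (B.h𝒟 W hW)]

/-- Radius bound for discs of the target of an allocation map. -/
lemma IsAllocationMap.disc_radius_le {A B : SwissCheese} {g : Set ℂ → Set ℂ}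
    (hg : IsAllocationMap A B g) {W : Set ℂ} (hW : W ∈ B.𝒟) :
    ENNReal.ofReal (discRadius W) ≤ radSum A.𝒟 :=
  (hg.a3 W hW).trans (radSum_mono (fun U hU => hU.1))

lemma isAllocationMap_id (A : SwissCheese) : IsAllocationMap A A id where
  maps_to := fun _ hU => hU
  a1 := fun _ _ => subset_rfl
  a2 := by simp
  a3 := fun E' hE' => le_radSum_of_mem ⟨hE', rfl⟩

lemma SPair.ge_refl {D : SwissCheese} (p : SPair D) : p.ge p :=
  ⟨id, isAllocationMap_id _, fun _ _ => rfl⟩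

/-! ### The limit construction -/

section Construction

variable (D : SwissCheese) (C : Set (SPair D))

/-- `U` eventually escapes to the complement along the chain. -/
def escape (U : Set ℂ) : Prop := ∃ p : C, (p : SPair D).f U = (p : SPair D).E.Δᶜ

/-- The limit closed disc: intersection of the `Δ`'s along the chain. -/
noncomputable def limΔ : Set ℂ := ⋂ p : C, (p : SPair D).E.Δ

open Classical in
/-- The limit allocation map. -/
noncomputable def bigf (U : Set ℂ) : Set ℂ :=
  if U = D.Δᶜ ∨ escape D C U then (limΔ D C)ᶜ else ⋃ p : C, (p : SPair D).f U

open Classical in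
/-- The connecting allocation map from a member of the chain to the limit. -/
noncomputable def gmap (p : SPair D) (W : Set ℂ) : Set ℂ :=
  if h : ∃ U, U ∈ D.𝒟 ∧ p.f U = W then bigf D C h.choose else (limΔ D C)ᶜ

lemma bigf_of_escape {U : Set ℂ} (h : escape D C U) : bigf D C U = (limΔ D C)ᶜ :=
  if_pos (Or.inr h)

lemma bigf_compl : bigf D C D.Δᶜ = (limΔ D C)ᶜ := if_pos (Or.inl rfl)

lemma bigf_of_not {U : Set ℂ} (h1 : U ≠ D.Δᶜ) (h2 : ¬ escape D C U) :
    bigf D C U = ⋃ p : C, (p : SPair D).f U := if_neg (by tauto)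

lemma limΔ_subset (p : C) : limΔ D C ⊆ (p : SPair D).E.Δ := Set.iInter_subset _ p

variable {D C}

lemma chain_total (hC : IsChain SPair.ge C) (p q : C) :
    (p : SPair D).ge q ∨ (q : SPair D).ge p := by
  rcases eq_or_ne (p : SPair D) (q : SPair D) with h | h
  · exact Or.inl (h ▸ SPair.ge_refl _)
  · exact hC p.2 q.2 h

lemma ge_f_subset {p q : SPair D} (h : q.ge p) {U : Set ℂ} (hU : U ∈ D.tilde) :
    p.f U ⊆ q.f U := by
  obtain ⟨g, hg, hcomp⟩ := h
  rw [← hcomp U hU]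
  exact hg.a1 _ (p.hf.maps_to U hU)

lemma ge_delta_subset {p q : SPair D} (h : q.ge p) : q.E.Δ ⊆ p.E.Δ := by
  obtain ⟨g, hg, _⟩ := h
  exact hg.delta_subset

lemma escape_congr (hC : IsChain SPair.ge C) (p : C) {U U' : Set ℂ}
    (hU : U ∈ D.tilde) (hU' : U' ∈ D.tilde)
    (hf : (p : SPair D).f U = (p : SPair D).f U') (h : escape D C U) :
    escape D C U' := by
  obtain ⟨q, hq⟩ := h
  rcases chain_total hC q p with hqp | hpq
  · obtain ⟨g, hg, hcomp⟩ := hqp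
    refine ⟨q, ?_⟩
    rw [← hcomp U' hU', ← hf, hcomp U hU, hq]
  · have h1 : (q : SPair D).f U ⊆ (p : SPair D).f U := ge_f_subset hpq hU
    rw [hq, hf] at h1
    have h2 : ¬ Bornology.IsBounded ((p : SPair D).f U') := fun hb =>
      not_isBounded_compl (q : SPair D).E (hb.subset h1)
    exact ⟨p, eq_compl_of_unbounded ((p : SPair D).hf.maps_to U' hU') h2⟩

lemma iUnion_f_congr (hC : IsChain SPair.ge C) (p : C) {U U' : Set ℂ}
    (hU : U ∈ D.tilde) (hU' : U' ∈ D.tilde)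
    (hf : (p : SPair D).f U = (p : SPair D).f U') :
    (⋃ q : C, (q : SPair D).f U) ⊆ ⋃ q : C, (q : SPair D).f U' := by
  refine Set.iUnion_subset fun q => ?_
  rcases chain_total hC q p with hqp | hpq
  · obtain ⟨g, hg, hcomp⟩ := hqp
    have h1 : (q : SPair D).f U = (q : SPair D).f U' := by
      rw [← hcomp U hU, ← hcomp U' hU', hf]
    rw [h1]
    exact Set.subset_iUnion (fun q : C => (q : SPair D).f U') q
  · have h1 : (q : SPair D).f U ⊆ (p : SPair D).f U := ge_f_subset hpq hU
    rw [hf] at h1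
    exact h1.trans (Set.subset_iUnion (fun q : C => (q : SPair D).f U') p)

lemma bigf_congr (hC : IsChain SPair.ge C) (p : C) {U U' : Set ℂ}
    (hU : U ∈ D.𝒟) (hU' : U' ∈ D.𝒟)
    (hf : (p : SPair D).f U = (p : SPair D).f U') : bigf D C U = bigf D C U' := by
  by_cases h : escape D C U
  · rw [bigf_of_escape D C h,
      bigf_of_escape D C (escape_congr hC p (Or.inl hU) (Or.inl hU') hf h)]
  · have h' : ¬ escape D C U' := fun he =>
      h (escape_congr hC p (Or.inl hU') (Or.inl hU) hf.symm he)
    rw [bigf_of_not D C (mem_𝒟_ne_compl hU) h, bigf_of_not D C (mem_𝒟_ne_compl hU') h']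
    exact (iUnion_f_congr hC p (Or.inl hU) (Or.inl hU') hf).antisymm
      (iUnion_f_congr hC p (Or.inl hU') (Or.inl hU) hf.symm)

lemma f_subset_bigf (hC : IsChain SPair.ge C) (p : C) {U : Set ℂ} (hU : U ∈ D.tilde) :
    (p : SPair D).f U ⊆ bigf D C U := by
  rcases hU with hU | hU
  · by_cases h : escape D C U
    · rw [bigf_of_escape D C h]
      obtain ⟨q, hq⟩ := h
      rcases chain_total hC q p with hqp | hpq
      · refine (ge_f_subset hqp (Or.inl hU)).trans ?_
        rw [hq]
        exact compl_subset_compl.mpr (limΔ_subset D C q)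
      · have h1 : (q : SPair D).f U ⊆ (p : SPair D).f U := ge_f_subset hpq (Or.inl hU)
        rw [hq] at h1
        have h2 : ¬ Bornology.IsBounded ((p : SPair D).f U) := fun hb =>
          not_isBounded_compl (q : SPair D).E (hb.subset h1)
        rw [eq_compl_of_unbounded ((p : SPair D).hf.maps_to U (Or.inl hU)) h2]
        exact compl_subset_compl.mpr (limΔ_subset D C p)
    · rw [bigf_of_not D C (mem_𝒟_ne_compl hU) h]
      exact Set.subset_iUnion (fun q : C => (q : SPair D).f U) p
  · rw [Set.mem_singleton_iff] at hU
    subst hU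
    rw [bigf_compl, (p : SPair D).hf.map_compl]
    exact compl_subset_compl.mpr (limΔ_subset D C p)

lemma gmap_comp (hC : IsChain SPair.ge C) {p : SPair D} (hp : p ∈ C) {U : Set ℂ}
    (hU : U ∈ D.tilde) : gmap D C p (p.f U) = bigf D C U := by
  rcases hU with hU | hU
  · have hex : ∃ U', U' ∈ D.𝒟 ∧ p.f U' = p.f U := ⟨U, hU, rfl⟩
    rw [gmap, dif_pos hex]
    exact bigf_congr hC ⟨p, hp⟩ hex.choose_spec.1 hU hex.choose_spec.2
  · rw [Set.mem_singleton_iff] at hU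
    subst hU
    rw [p.hf.map_compl, gmap]
    split_ifs with h
    · rw [bigf_of_escape D C ⟨⟨p, hp⟩, h.choose_spec.2⟩, bigf_compl]
    · rw [bigf_compl]

lemma gmap_delta_compl {p : SPair D} (hp : p ∈ C) :
    gmap D C p p.E.Δᶜ = (limΔ D C)ᶜ := by
  rw [gmap]
  split_ifs with h
  · rw [bigf_of_escape D C ⟨⟨p, hp⟩, h.choose_spec.2⟩]
  · rfl

lemma gmap_mem {p : SPair D} {W : Set ℂ} (hW : W ∈ p.E.𝒟) :
    ∃ U, U ∈ D.𝒟 ∧ p.f U = W ∧ gmap D C p W = bigf D C U := by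
  have hex : ∃ U, U ∈ D.𝒟 ∧ p.f U = W := p.hf.exists_preimage hW
  exact ⟨hex.choose, hex.choose_spec.1, hex.choose_spec.2, by rw [gmap, dif_pos hex]⟩

end Construction

theorem chain_has_upper_bound_of_nonempty (D : SwissCheese) (hδ : 0 < D.delta)
    (C : Set (SPair D)) (hC : IsChain SPair.ge C) (hne : C.Nonempty) :
    ∃ ub : SPair D, ∀ p ∈ C, SPair.ge ub p := by
  classical
  haveI : Nonempty ↥C := hne.to_subtype
  -- Finiteness of the total radius sum
  have hfin : radSum D.𝒟 ≠ ⊤ := by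
    intro h
    rw [SwissCheese.delta, h, EReal.coe_ennreal_top, EReal.sub_top] at hδ
    exact not_lt_bot hδ
  set Sr : ℝ := (radSum D.𝒟).toReal with hSrdef
  have hcoe : ((radSum D.𝒟 : ENNReal) : EReal) = ((Sr : ℝ) : EReal) := by
    rw [hSrdef, ← EReal.toReal_coe_ennreal]
    rw [EReal.coe_toReal]
    · simpa [EReal.coe_ennreal_eq_top_iff] using hfin
    · exact EReal.coe_ennreal_ne_bot _
  have hSR : Sr < discRadius D.Δ := by
    rw [SwissCheese.delta, hcoe, ← EReal.coe_sub] at hδ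
    have := EReal.coe_pos.mp hδ
    linarith
  -- basic facts about members of the chain
  have hdiscS : ∀ p : C, ∀ W ∈ (p : SPair D).E.𝒟, discRadius W ≤ Sr := by
    intro p W hW
    have := (p : SPair D).hf.disc_radius_le hW
    rwa [ENNReal.ofReal_le_iff_le_toReal hfin] at this
  have hfD : ∀ (U : Set ℂ), U ∈ D.𝒟 → ¬ escape D C U →
      ∀ q : C, (q : SPair D).f U ∈ (q : SPair D).E.𝒟 := by
    intro U hU hesc q
    rcases (q : SPair D).hf.maps_to U (Or.inl hU) with h | h
    · exact h
    · exact absurd ⟨q, h⟩ hesc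
  -- parametrize the closed discs of the chain
  choose zc rc hrc hballc using fun p : C => (p : SPair D).E.hΔ
  have hrcrad : ∀ p : C, discRadius (p : SPair D).E.Δ = rc p := fun p => by
    rw [hballc p]; exact discRadius_closedBall _ (hrc p).le
  have hrcδ : ∀ p : C, discRadius D.Δ - Sr ≤ rc p := by
    intro p
    have h2 : ENNReal.ofReal (discRadius D.Δ - rc p) ≤ radSum D.𝒟 := by
      rw [← hrcrad p]
      exact (p : SPair D).hf.a2.trans (radSum_mono fun U hU => hU.1)
    rw [ENNReal.ofReal_le_iff_le_toReal hfin] at h2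
    linarith
  -- the limit closed disc
  obtain ⟨z₀, hball₀⟩ := chain_closedBalls zc rc hrc (by
    intro p q
    rw [← hballc p, ← hballc q]
    rcases chain_total hC p q with h | h
    · exact Or.inl (ge_delta_subset h)
    · exact Or.inr (ge_delta_subset h))
  set r₀ : ℝ := ⨅ p : C, rc p with hr₀def
  have hHeq : limΔ D C = closedBall z₀ r₀ := by
    rw [limΔ, ← hball₀]
    exact Set.iInter_congr hballc
  have hr₀δ : discRadius D.Δ - Sr ≤ r₀ := le_ciInf hrcδ
  have hr₀pos : 0 < r₀ := lt_of_lt_of_le (by linarith) hr₀δ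
  have hrcbdd : BddBelow (Set.range rc) := ⟨0, by rintro x ⟨p, rfl⟩; exact (hrc p).le⟩
  have hr₀le : ∀ p : C, r₀ ≤ rc p := fun p => ciInf_le hrcbdd p
  have hHrad : discRadius (limΔ D C) = r₀ := by
    rw [hHeq]; exact discRadius_closedBall _ hr₀pos.le
  have hHdisc : IsClosedDisc (limΔ D C) := ⟨z₀, r₀, hr₀pos, hHeq⟩
  -- the discs of the limit cheese
  have hUball : ∀ (U : Set ℂ), U ∈ D.𝒟 → ¬ escape D C U →
      IsOpenDisc (bigf D C U) ∧
      (∀ q : C, discRadius ((q : SPair D).f U) ≤ discRadius (bigf D C U)) ∧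
      (∀ ε : ℝ, 0 < ε → ∃ q : C,
        discRadius (bigf D C U) - ε < discRadius ((q : SPair D).f U)) := by
    intro U hU hesc
    choose zb rb hrb hballb using fun q : C => (q : SPair D).E.h𝒟 _ (hfD U hU hesc q)
    have hrbrad : ∀ q : C, discRadius ((q : SPair D).f U) = rb q := fun q => by
      rw [hballb q]; exact discRadius_ball _ (hrb q)
    have hbdd : BddAbove (Set.range rb) := by
      refine ⟨Sr, ?_⟩
      rintro x ⟨q, rfl⟩
      rw [← hrbrad q]
      exact hdiscS q _ (hfD U hU hesc q)
    obtain ⟨w, hw⟩ := chain_balls zb rb hrb hbdd (by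
      intro p q
      rw [← hballb p, ← hballb q]
      rcases chain_total hC p q with h | h
      · exact Or.inr (ge_f_subset h (Or.inl hU))
      · exact Or.inl (ge_f_subset h (Or.inl hU)))
    have huni : bigf D C U = ball w (⨆ q : C, rb q) := by
      rw [bigf_of_not D C (mem_𝒟_ne_compl hU) hesc, ← hw]
      exact Set.iUnion_congr hballb
    have hsup_pos : 0 < ⨆ q : C, rb q :=
      lt_of_lt_of_le (hrb (Classical.arbitrary _)) (le_ciSup hbdd _)
    have hradU : discRadius (bigf D C U) = ⨆ q : C, rb q := by
      rw [huni]; exact discRadius_ball _ hsup_pos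
    refine ⟨⟨w, _, hsup_pos, huni⟩, ?_, ?_⟩
    · intro q
      rw [hradU, hrbrad q]
      exact le_ciSup hbdd q
    · intro ε hε
      obtain ⟨q, hq⟩ := exists_lt_of_lt_ciSup (show (⨆ q : C, rb q) - ε < ⨆ q : C, rb q by
        linarith)
      exact ⟨q, by rw [hradU, hrbrad q]; exact hq⟩
  -- the limit Swiss cheese
  refine ⟨⟨⟨limΔ D C, bigf D C '' {U | U ∈ D.𝒟 ∧ ¬ escape D C U}, hHdisc, ?_, ?_⟩,
      bigf D C, ?_, ?_, ?_, ?_⟩, ?_⟩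
  · -- each disc is an open disc
    rintro V ⟨U, ⟨hU, hesc⟩, rfl⟩
    exact (hUball U hU hesc).1
  · -- countability
    exact (D.hcount.mono fun U hU => hU.1).image _
  · -- maps_to
    intro U hU
    rcases hU with hU | hU
    · by_cases h : escape D C U
      · right
        rw [bigf_of_escape D C h]
        rfl
      · exact Or.inl ⟨U, ⟨hU, h⟩, rfl⟩
    · rw [Set.mem_singleton_iff] at hU
      subst hU
      right
      rw [bigf_compl]
      rfl
  · -- a1
    intro U hU
    obtain ⟨p₀, hp₀⟩ := hne
    exact ((p₀.hf.a1 U hU).trans (f_subset_bigf hC ⟨p₀, hp₀⟩ hU))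
  · -- a2
    show ENNReal.ofReal (discRadius D.Δ - discRadius (limΔ D C)) ≤ _
    rw [hHrad]
    apply ofReal_le_of_forall_sub
    intro ε hε
    obtain ⟨q, hq⟩ := exists_lt_of_ciInf_lt (show (⨅ p : C, rc p) < r₀ + ε by
      rw [← hr₀def]; linarith)
    refine le_trans (ENNReal.ofReal_le_ofReal ?_) (((q : SPair D).hf.a2).trans
      (radSum_mono ?_))
    · rw [hrcrad q]
      have := hr₀le q
      linarith
    · rintro U ⟨hU, hfU⟩
      exact ⟨hU, by rw [bigf_of_escape D C ⟨q, hfU⟩]⟩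
  · -- a3
    rintro V ⟨U₀, ⟨hU₀, hesc⟩, rfl⟩
    obtain ⟨hop, hle, happrox⟩ := hUball U₀ hU₀ hesc
    apply ofReal_le_of_forall_sub
    intro ε hε
    obtain ⟨q, hq⟩ := happrox ε hε
    refine le_trans (ENNReal.ofReal_le_ofReal hq.le)
      (((q : SPair D).hf.a3 _ (hfD U₀ hU₀ hesc q)).trans (radSum_mono ?_))
    rintro U ⟨hU, hfU⟩
    exact ⟨hU, bigf_congr hC q hU hU₀ hfU⟩
  · -- upper bound property
    intro p hp
    refine ⟨gmap D C p, ⟨?_, ?_, ?_, ?_⟩, fun U hU => gmap_comp hC hp hU⟩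
    · -- maps_to
      intro W hW
      rcases hW with hW | hW
      · obtain ⟨U, hU, hpfU, heq⟩ := gmap_mem (C := C) hW
        rw [heq]
        by_cases h : escape D C U
        · right
          rw [bigf_of_escape D C h]
          rfl
        · exact Or.inl ⟨U, ⟨hU, h⟩, rfl⟩
      · rw [Set.mem_singleton_iff] at hW
        subst hW
        right
        rw [gmap_delta_compl hp]
        rfl
    · -- a1
      intro W hW
      rcases hW with hW | hW
      · obtain ⟨U, hU, hpfU, heq⟩ := gmap_mem (C := C) hW
        rw [heq, ← hpfU]
        exact f_subset_bigf hC ⟨p, hp⟩ (Or.inl hU)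
      · rw [Set.mem_singleton_iff] at hW
        subst hW
        rw [gmap_delta_compl hp]
        exact compl_subset_compl.mpr (limΔ_subset D C ⟨p, hp⟩)
    · -- a2
      show ENNReal.ofReal (discRadius p.E.Δ - discRadius (limΔ D C)) ≤
        radSum {W | W ∈ p.E.𝒟 ∧ gmap D C p W = (limΔ D C)ᶜ}
      rw [hHrad]
      have hkey : ∀ q : C, ENNReal.ofReal (discRadius p.E.Δ - rc q) ≤
          radSum {W | W ∈ p.E.𝒟 ∧ gmap D C p W = (limΔ D C)ᶜ} := by
        intro q
        rcases chain_total hC q ⟨p, hp⟩ with hgeq | hgeq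
        · obtain ⟨g, hg, hcomp⟩ := hgeq
          have hcomp' : ∀ V ∈ D.tilde, g (p.f V) = (q : SPair D).f V := hcomp
          refine le_trans ?_ ((hg.a2).trans (radSum_mono ?_))
          · rw [hrcrad q]
          · rintro W ⟨hW, hgW⟩
            obtain ⟨U, hU, hpfU, heq⟩ := gmap_mem (C := C) hW
            refine ⟨hW, ?_⟩
            rw [heq]
            refine bigf_of_escape D C ⟨q, ?_⟩
            rw [← hcomp' U (Or.inl hU), hpfU, hgW]
        · have hsub : p.E.Δ ⊆ (q : SPair D).E.Δ := ge_delta_subset hgeq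
          have h1 : discRadius p.E.Δ ≤ rc q := by
            rw [← hrcrad q]
            exact discRadius_mono hsub (isBounded_delta _)
          rw [ENNReal.ofReal_eq_zero.mpr (by linarith)]
          exact zero_le
      apply ofReal_le_of_forall_sub
      intro ε hε
      obtain ⟨q, hq⟩ := exists_lt_of_ciInf_lt (show (⨅ p : C, rc p) < r₀ + ε by
        rw [← hr₀def]; linarith)
      exact le_trans (ENNReal.ofReal_le_ofReal (by linarith)) (hkey q)
    · -- a3
      rintro V ⟨U₀, ⟨hU₀, hesc⟩, rfl⟩
      obtain ⟨hop, hle, happrox⟩ := hUball U₀ hU₀ hesc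
      have hkey : ∀ q : C, ENNReal.ofReal (discRadius ((q : SPair D).f U₀)) ≤
          radSum {W | W ∈ p.E.𝒟 ∧ gmap D C p W = bigf D C U₀} := by
        intro q
        rcases chain_total hC q ⟨p, hp⟩ with hgeq | hgeq
        · obtain ⟨g, hg, hcomp⟩ := hgeq
          have hcomp' : ∀ V ∈ D.tilde, g (p.f V) = (q : SPair D).f V := hcomp
          refine le_trans (hg.a3 _ (hfD U₀ hU₀ hesc q)) (radSum_mono ?_)
          rintro W ⟨hW, hgW⟩
          obtain ⟨U, hU, hpfU, heq⟩ := gmap_mem (C := C) hW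
          refine ⟨hW, ?_⟩
          rw [heq]
          refine bigf_congr hC q hU hU₀ ?_
          rw [← hcomp' U (Or.inl hU), hpfU, hgW]
        · have h1 : discRadius ((q : SPair D).f U₀) ≤ discRadius (p.f U₀) := by
            refine discRadius_mono (ge_f_subset hgeq (Or.inl hU₀)) ?_
            exact isBounded_of_mem_𝒟 (hfD U₀ hU₀ hesc ⟨p, hp⟩)
          refine le_trans (ENNReal.ofReal_le_ofReal h1) (le_radSum_of_mem ?_)
          exact ⟨hfD U₀ hU₀ hesc ⟨p, hp⟩, gmap_comp hC hp (Or.inl hU₀)⟩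
      apply ofReal_le_of_forall_sub
      intro ε hε
      obtain ⟨q, hq⟩ := happrox ε hε
      exact le_trans (ENNReal.ofReal_le_ofReal (by linarith)) (hkey q)

theorem chain_has_upper_bound (D : SwissCheese) (hδ : 0 < D.delta)
    (C : Set (SPair D)) (hC : IsChain SPair.ge C) :
    ∃ ub : SPair D, ∀ p ∈ C, SPair.ge ub p := by
  rcases C.eq_empty_or_nonempty with rfl | hne
  · exact ⟨⟨D, id, isAllocationMap_id D⟩, fun p hp => absurd hp (Set.notMem_empty p)⟩
  · exact chain_has_upper_bound_of_nonempty D hδ C hC hne
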